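/- For a square matrix M over ℝ partitioned by index sets a and b with all relevant principal submatrices invertible, partial inversion with respect to a followed by partial inversion with respect to b equals partial inversion with respect to b followed by partial inversion with respect to a. -/

import Mathlib

/-- Partial inversion of a square real matrix with respect to a single index `k`. -/
noncomputable def invStep {ι : Type*} [DecidableEq ι] (M : Matrix ι ι ℝ) (k : ι) : Matrix ι ι ℝ :=
  Matrix.of fun i j =>
    if i = k then (if j = k then 1 / M k k else - M k j / M k k)
    else if j = k then M i k / M k k
    else M i j - M i k * M k j / M k k

/-- Partial inversion with respect to a sequence of indices, applied in order. -/
noncomputable def invList {ι : Type*} [DecidableEq ι] (l : List ι) (M : Matrix ι ι ℝ) : Matrix ι ι ℝ :=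
  l.foldl invStep M

/-- All principal submatrices of `M` are invertible. -/
def allPrincipalInvertible {ι : Type*} [Fintype ι] [DecidableEq ι]
    (M : Matrix ι ι ℝ) : Prop :=
  ∀ s : Finset ι,
    (M.submatrix (fun i : s => (i : ι)) (fun i : s => (i : ι))).det ≠ 0

section Aux

variable {ι : Type*} [Fintype ι] [DecidableEq ι]

/-- Input mixer: take `M.mulVec x` on `s`, `x` elsewhere. -/
noncomputable def mixIn (M : Matrix ι ι ℝ) (s : Finset ι) (x : ι → ℝ) : ι → ℝ :=
  fun i => if i ∈ s then M.mulVec x i else x i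

/-- Output mixer: take `x` on `s`, `M.mulVec x` elsewhere. -/
noncomputable def mixOut (M : Matrix ι ι ℝ) (s : Finset ι) (x : ι → ℝ) : ι → ℝ :=
  fun i => if i ∈ s then x i else M.mulVec x i

lemma eq_zero_of_principal (M : Matrix ι ι ℝ) (hM : allPrincipalInvertible M)
    (t : Finset ι) (x : ι → ℝ)
    (h1 : ∀ i ∈ t, M.mulVec x i = 0) (h2 : ∀ j, j ∉ t → x j = 0) : x = 0 := by
  set B := M.submatrix (fun i : t => (i : ι)) (fun i : t => (i : ι)) with hB
  have : Invertible B := Matrix.invertibleOfIsUnitDet B (Ne.isUnit (hM t))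
  have hu : B.mulVec (fun j : t => x j) = 0 := by
    funext i
    have : B.mulVec (fun j : t => x j) i = ∑ j : t, M i j * x j := by
      simp [Matrix.mulVec, dotProduct, hB]
    rw [this]
    have hsplit : ∑ j : t, M (i : ι) (j : ι) * x j = ∑ j, M (i : ι) j * x j := by
      rw [← Finset.sum_subtype t (fun j => Iff.rfl) (fun j => M (i : ι) j * x j)]
      apply Finset.sum_subset (Finset.subset_univ t)
      intro j _ hj
      rw [h2 j hj, mul_zero]
    rw [hsplit]
    exact h1 i i.2
  have h0 : B.mulVec (fun j : t => x j) = B.mulVec 0 := by rw [hu, Matrix.mulVec_zero]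
  have := Matrix.mulVec_injective_of_invertible B h0
  funext j
  by_cases hj : j ∈ t
  · exact congrFun this ⟨j, hj⟩
  · exact h2 j hj

lemma mixIn_surjective (M : Matrix ι ι ℝ) (hM : allPrincipalInvertible M)
    (s : Finset ι) : Function.Surjective (mixIn M s) := by
  let f : (ι → ℝ) →ₗ[ℝ] (ι → ℝ) :=
    { toFun := mixIn M s
      map_add' := fun x y => by
        funext i; simp only [mixIn, Matrix.mulVec_add, Pi.add_apply]
        split <;> simp
      map_smul' := fun c x => by
        funext i; simp only [mixIn, Matrix.mulVec_smul, Pi.smul_apply, RingHom.id_apply]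
        split <;> simp }
  have hinj : Function.Injective f := by
    rw [← LinearMap.ker_eq_bot, LinearMap.ker_eq_bot']
    intro x hx
    have hx' : mixIn M s x = 0 := hx
    apply eq_zero_of_principal M hM s x
    · intro i hi
      have := congrFun hx' i
      simpa [mixIn, hi] using this
    · intro j hj
      have := congrFun hx' j
      simpa [mixIn, hj] using this
  exact LinearMap.injective_iff_surjective.mp hinj

lemma invStep_mulVec (N : Matrix ι ι ℝ) (k : ι) (hk : N k k ≠ 0) (z : ι → ℝ) :
    (invStep N k).mulVec (fun i => if i = k then N.mulVec z k else z i)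
      = fun i => if i = k then z i else N.mulVec z i := by
  have hsplit : ∀ (f : ι → ℝ), ∑ j, f j = f k + ∑ j ∈ Finset.univ.erase k, f j :=
    fun f => (Finset.add_sum_erase _ f (Finset.mem_univ k)).symm
  funext i
  simp only [Matrix.mulVec, dotProduct]
  rw [hsplit]
  by_cases hi : i = k
  · subst hi
    have he : (∑ j ∈ Finset.univ.erase i, invStep N i i j
          * (if j = i then ∑ x : ι, N i x * z x else z j))
        = (-(1 / N i i)) * ∑ j ∈ Finset.univ.erase i, N i j * z j := by
      rw [Finset.mul_sum]
      refine Finset.sum_congr rfl fun j hj => ?_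
      have hjk : j ≠ i := Finset.ne_of_mem_erase hj
      simp only [invStep, Matrix.of_apply, if_neg hjk, eq_self_iff_true, if_true]
      ring
    rw [he]
    have hd : invStep N i i i = 1 / N i i := by simp [invStep]
    rw [hd, if_pos rfl, if_pos rfl, hsplit (fun x => N i x * z x)]
    field_simp
    ring
  · have he : (∑ j ∈ Finset.univ.erase k, invStep N k i j
          * (if j = k then ∑ x : ι, N k x * z x else z j))
        = (∑ j ∈ Finset.univ.erase k, N i j * z j)
          + (-(N i k / N k k)) * ∑ j ∈ Finset.univ.erase k, N k j * z j := by
      rw [Finset.mul_sum, ← Finset.sum_add_distrib]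
      refine Finset.sum_congr rfl fun j hj => ?_
      have hjk : j ≠ k := Finset.ne_of_mem_erase hj
      simp only [invStep, Matrix.of_apply, if_neg hjk, if_neg hi]
      ring
    rw [he]
    have hd : invStep N k i k = N i k / N k k := by simp [invStep, hi]
    rw [hd, if_pos rfl, if_neg hi, hsplit (fun x => N k x * z x), hsplit (fun x => N i x * z x)]
    field_simp
    ring

lemma invList_mulVec (M : Matrix ι ι ℝ) (hM : allPrincipalInvertible M)
    (l : List ι) (hl : l.Nodup) (x : ι → ℝ) :
    (invList l M).mulVec (mixIn M l.toFinset x) = mixOut M l.toFinset x := by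
  induction l using List.reverseRecOn generalizing x with
  | nil =>
    have h1 : mixIn M ([] : List ι).toFinset x = x := by funext i; simp [mixIn]
    have h2 : mixOut M ([] : List ι).toFinset x = M.mulVec x := by funext i; simp [mixOut]
    rw [h1, h2]; rfl
  | append_singleton l k ih =>
    have hl' : l.Nodup := (List.nodup_append'.mp hl).1
    have hkl : k ∉ l := by
      have := (List.nodup_append'.mp hl).2.2
      intro hkmem; exact this hkmem (List.mem_singleton_self k)
    have hks : k ∉ l.toFinset := by simpa using hkl
    set N := invList l M with hN
    set s := l.toFinset with hs
    -- pivot is nonzero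
    have hk : N k k ≠ 0 := by
      intro h0
      obtain ⟨x₀, hx₀⟩ := mixIn_surjective M hM s (Pi.single k 1)
      have hNe : N.mulVec (Pi.single k 1) = mixOut M s x₀ := by
        rw [← hx₀]; exact ih hl' x₀
      have hMk : M.mulVec x₀ k = 0 := by
        have h1 : N.mulVec (Pi.single k 1) k = N k k := by
          rw [Matrix.mulVec_single]; simp
        have h2 : mixOut M s x₀ k = M.mulVec x₀ k := by simp [mixOut, hks]
        rw [hNe, h2] at h1; rw [h1]; exact h0
      have hx0 : x₀ = 0 := by
        apply eq_zero_of_principal M hM (insert k s) x₀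
        · intro i hi
          rcases Finset.mem_insert.mp hi with hik | his
          · rw [hik]; exact hMk
          · have := congrFun hx₀ i
            simp only [mixIn, his, if_pos] at this
            rw [this]
            refine Pi.single_eq_of_ne ?_ 1
            rintro rfl; exact hks his
        · intro j hj
          simp only [Finset.mem_insert, not_or] at hj
          have := congrFun hx₀ j
          simp only [mixIn, hj.2, if_neg, if_false] at this
          rw [this]
          exact Pi.single_eq_of_ne hj.1 1
      have : mixIn M s x₀ k = (1 : ℝ) := by rw [hx₀]; simp
      rw [hx0] at this
      simp [mixIn] at this
    -- main computation
    have hfold : invList (l ++ [k]) M = invStep N k := by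
      simp only [hN, invList, List.foldl_append, List.foldl_cons, List.foldl_nil]
    have htf : (l ++ [k]).toFinset = insert k s := by
      ext i; simp [hs, List.toFinset_append, or_comm]
    rw [hfold, htf]
    have key := invStep_mulVec N k hk (mixIn M s x)
    have hin : (fun i => if i = k then N.mulVec (mixIn M s x) k else mixIn M s x i)
        = mixIn M (insert k s) x := by
      funext i
      by_cases hik : i = k
      · subst hik
        rw [if_pos rfl, ih hl' x]
        simp [mixOut, mixIn, hks]
      · rw [if_neg hik]
        simp only [mixIn, Finset.mem_insert, hik, false_or]
    have hout : (fun i => if i = k then mixIn M s x i else N.mulVec (mixIn M s x) i)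
        = mixOut M (insert k s) x := by
      funext i
      by_cases hik : i = k
      · subst hik
        rw [if_pos rfl]
        simp [mixIn, mixOut, hks]
      · rw [if_neg hik, ih hl' x]
        simp only [mixOut, mixIn, Finset.mem_insert, hik, false_or]
    rw [← hin, key, hout]

end Aux

/-- partial inversion on disjoint index sets commutes. -/
theorem partialInversion_comm {ι : Type*} [Fintype ι] [DecidableEq ι]
    (M : Matrix ι ι ℝ) (hM : allPrincipalInvertible M)
    (la lb : List ι) (hna : la.Nodup) (hnb : lb.Nodup)
    (hdisj : Disjoint la.toFinset lb.toFinset) :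
    invList lb (invList la M) = invList la (invList lb M) := by
  have hld : la.Disjoint lb := List.disjoint_toFinset_iff_disjoint.mp hdisj
  have hab : (la ++ lb).Nodup := List.Nodup.append hna hnb hld
  have hba : (lb ++ la).Nodup := List.Nodup.append hnb hna hld.symm
  set s := la.toFinset ∪ lb.toFinset with hs
  have htab : (la ++ lb).toFinset = s := by simp [hs, List.toFinset_append]
  have htba : (lb ++ la).toFinset = s := by
    ext i; simp [hs, List.toFinset_append, or_comm]
  have h1 := invList_mulVec M hM (la ++ lb) hab
  have h2 := invList_mulVec M hM (lb ++ la) hba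
  rw [htab] at h1; rw [htba] at h2
  have hf1 : invList (la ++ lb) M = invList lb (invList la M) := by
    simp [invList, List.foldl_append]
  have hf2 : invList (lb ++ la) M = invList la (invList lb M) := by
    simp [invList, List.foldl_append]
  rw [hf1] at h1; rw [hf2] at h2
  have hmv : ∀ v, (invList lb (invList la M)).mulVec v
      = (invList la (invList lb M)).mulVec v := by
    intro v
    obtain ⟨x, hx⟩ := mixIn_surjective M hM s v
    rw [← hx, h1 x, h2 x]
  ext i j
  have := congrFun (hmv (Pi.single j 1)) i
  simpa [Matrix.mulVec_single] using this
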